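/- The component identity of the dynamical Yang–Baxter equation holds: for all ℏ, z₁, z₂, z₃ ∈ ℂ and all x, y ∈ ℂ (playing the roles of q_i−q_k and q_k−q_j respectively), R^{x}_{12}(z₁−z₂) R^{y}_{13}(z₁−z₃) R^{x}_{23}(z₂−z₃) + φ(ℏ,x)φ(ℏ,−x) · R^{x+y}_{13}(z₁−z₃) = R^{y}_{23}(z₂−z₃) R^{x}_{13}(z₁−z₃) R^{y}_{12}(z₁−z₂) + φ(ℏ,y)φ(ℏ,−y) · R^{x+y}_{13}(z₁−z₃) in Mat_N(ℂ)^{⊗3}. -/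

import Mathlib

open Matrix Kronecker BigOperators

/-- The permutation operator `P₁₂ = Σ_{i,j} e_{ij} ⊗ e_{ji}` on `ℂ^N ⊗ ℂ^N`. -/
def Perm (N : ℕ) : Matrix (Fin N × Fin N) (Fin N × Fin N) ℂ :=
  Matrix.of fun p q => if p.1 = q.2 ∧ p.2 = q.1 then 1 else 0

/-- Embedding `X ↦ X₁₂` of `Mat_N ⊗ Mat_N` into the tensor factors 1,2 of `Mat_N^{⊗3}`. -/
def e12 {N : ℕ} (X : Matrix (Fin N × Fin N) (Fin N × Fin N) ℂ) :
    Matrix (Fin N × Fin N × Fin N) (Fin N × Fin N × Fin N) ℂ :=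
  Matrix.of fun p q =>
    X (p.1, p.2.1) (q.1, q.2.1) * (if p.2.2 = q.2.2 then (1 : ℂ) else 0)

/-- Embedding `X ↦ X₁₃` of `Mat_N ⊗ Mat_N` into the tensor factors 1,3 of `Mat_N^{⊗3}`. -/
def e13 {N : ℕ} (X : Matrix (Fin N × Fin N) (Fin N × Fin N) ℂ) :
    Matrix (Fin N × Fin N × Fin N) (Fin N × Fin N × Fin N) ℂ :=
  Matrix.of fun p q =>
    X (p.1, p.2.2) (q.1, q.2.2) * (if p.2.1 = q.2.1 then (1 : ℂ) else 0)

/-- Embedding `X ↦ X₂₃` of `Mat_N ⊗ Mat_N` into the tensor factors 2,3 of `Mat_N^{⊗3}`. -/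
def e23 {N : ℕ} (X : Matrix (Fin N × Fin N) (Fin N × Fin N) ℂ) :
    Matrix (Fin N × Fin N × Fin N) (Fin N × Fin N × Fin N) ℂ :=
  Matrix.of fun p q =>
    X (p.2.1, p.2.2) (q.2.1, q.2.2) * (if p.1 = q.1 then (1 : ℂ) else 0)


lemma perm_mul_apply {N : ℕ} (M : Matrix (Fin N × Fin N) (Fin N × Fin N) ℂ) (p q) :
    (Perm N * M) p q = M (p.2, p.1) q := by
  rw [Matrix.mul_apply]
  rw [Finset.sum_eq_single (p.2, p.1)]
  · simp [Perm]
  · intro r _ hr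
    have : ¬(p.1 = r.2 ∧ p.2 = r.1) := by
      rintro ⟨h1, h2⟩; exact hr (by ext <;> simp [← h1, ← h2])
    simp [Perm, this]
  · simp

lemma mul_perm_apply {N : ℕ} (M : Matrix (Fin N × Fin N) (Fin N × Fin N) ℂ) (p q) :
    (M * Perm N) p q = M p (q.2, q.1) := by
  rw [Matrix.mul_apply]
  rw [Finset.sum_eq_single (q.2, q.1)]
  · simp [Perm]
  · intro r _ hr
    have : ¬(r.1 = q.2 ∧ r.2 = q.1) := by
      rintro ⟨h1, h2⟩; exact hr (by ext <;> simp [h1, h2])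
    simp [Perm, this]
  · simp

lemma perm_conj_apply {N : ℕ} (M : Matrix (Fin N × Fin N) (Fin N × Fin N) ℂ) (p q) :
    (Perm N * M * Perm N) p q = M (p.2, p.1) (q.2, q.1) := by
  rw [mul_perm_apply, perm_mul_apply]

lemma perm_mul_perm {N : ℕ} : Perm N * Perm N = 1 := by
  ext p q
  rw [perm_mul_apply]
  simp [Perm, Matrix.one_apply, Prod.ext_iff, and_comm]

lemma e12_mul {N : ℕ} (X Y : Matrix (Fin N × Fin N) (Fin N × Fin N) ℂ) :
    e12 (X * Y) = e12 X * e12 Y := by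
  ext p q
  simp only [e12, Matrix.mul_apply, Matrix.of_apply, Fintype.sum_prod_type]
  simp [Finset.mul_sum, Finset.sum_mul, mul_ite, ite_mul, mul_assoc]

lemma e23_mul {N : ℕ} (X Y : Matrix (Fin N × Fin N) (Fin N × Fin N) ℂ) :
    e23 (X * Y) = e23 X * e23 Y := by
  ext p q
  simp only [e23, Matrix.mul_apply, Matrix.of_apply, Fintype.sum_prod_type]
  simp [Finset.mul_sum, Finset.sum_mul, mul_ite, ite_mul, mul_assoc]

lemma e13_mul {N : ℕ} (X Y : Matrix (Fin N × Fin N) (Fin N × Fin N) ℂ) :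
    e13 (X * Y) = e13 X * e13 Y := by
  ext p q
  simp only [e13, Matrix.mul_apply, Matrix.of_apply, Fintype.sum_prod_type]
  simp [Finset.mul_sum, Finset.sum_mul, mul_ite, ite_mul, mul_assoc]

lemma e12_one {N : ℕ} : e12 (N := N) 1 = 1 := by
  ext p q
  simp only [e12, Matrix.of_apply, Matrix.one_apply]
  by_cases h : p = q
  · subst h; simp
  · rw [if_neg h]
    by_cases h1 : (p.1, p.2.1) = (q.1, q.2.1) <;> by_cases h2 : p.2.2 = q.2.2 <;>
      simp_all [Prod.ext_iff]

lemma e13_one {N : ℕ} : e13 (N := N) 1 = 1 := by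
  ext p q
  simp only [e13, Matrix.of_apply, Matrix.one_apply]
  by_cases h : p = q
  · subst h; simp
  · rw [if_neg h]
    by_cases h1 : (p.1, p.2.2) = (q.1, q.2.2) <;> by_cases h2 : p.2.1 = q.2.1 <;>
      simp_all [Prod.ext_iff]

lemma e12_smul {N : ℕ} (c : ℂ) (X : Matrix (Fin N × Fin N) (Fin N × Fin N) ℂ) :
    e12 (c • X) = c • e12 X := by
  ext p q; simp [e12, mul_assoc]

lemma e13_smul {N : ℕ} (c : ℂ) (X : Matrix (Fin N × Fin N) (Fin N × Fin N) ℂ) :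
    e13 (c • X) = c • e13 X := by
  ext p q; simp [e13, mul_assoc]

def rev3 {N : ℕ} : (Fin N × Fin N × Fin N) ≃ (Fin N × Fin N × Fin N) where
  toFun p := (p.2.2, p.2.1, p.1)
  invFun p := (p.2.2, p.2.1, p.1)
  left_inv _ := rfl
  right_inv _ := rfl

def conj3 {N : ℕ} (M : Matrix (Fin N × Fin N × Fin N) (Fin N × Fin N × Fin N) ℂ) :
    Matrix (Fin N × Fin N × Fin N) (Fin N × Fin N × Fin N) ℂ :=
  Matrix.of fun p q => M (rev3 p) (rev3 q)

lemma conj3_mul {N : ℕ} (A B : Matrix (Fin N × Fin N × Fin N) (Fin N × Fin N × Fin N) ℂ) :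
    conj3 (A * B) = conj3 A * conj3 B := by
  ext p q
  simp only [conj3, Matrix.of_apply, Matrix.mul_apply]
  exact (Fintype.sum_equiv rev3 _ _ (fun r => rfl)).symm

lemma conj3_add {N : ℕ} (A B : Matrix (Fin N × Fin N × Fin N) (Fin N × Fin N × Fin N) ℂ) :
    conj3 (A + B) = conj3 A + conj3 B := rfl

def sw {N : ℕ} (X : Matrix (Fin N × Fin N) (Fin N × Fin N) ℂ) :
    Matrix (Fin N × Fin N) (Fin N × Fin N) ℂ :=
  Matrix.of fun a b => X (a.2, a.1) (b.2, b.1)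

lemma sw_eq_perm_conj {N : ℕ} (X : Matrix (Fin N × Fin N) (Fin N × Fin N) ℂ) :
    sw X = Perm N * X * Perm N := by
  ext p q; rw [perm_conj_apply]; rfl

lemma conj3_e12 {N : ℕ} (X : Matrix (Fin N × Fin N) (Fin N × Fin N) ℂ) :
    conj3 (e12 X) = e23 (sw X) := rfl

lemma conj3_e23 {N : ℕ} (X : Matrix (Fin N × Fin N) (Fin N × Fin N) ℂ) :
    conj3 (e23 X) = e12 (sw X) := rfl

lemma conj3_e13 {N : ℕ} (X : Matrix (Fin N × Fin N) (Fin N × Fin N) ℂ) :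
    conj3 (e13 X) = e13 (sw X) := rfl

lemma e12_neg {N : ℕ} (X : Matrix (Fin N × Fin N) (Fin N × Fin N) ℂ) :
    e12 (-X) = -(e12 X) := by
  ext p q
  simp only [e12, Matrix.of_apply, Matrix.neg_apply, mul_ite, mul_one, mul_zero]
  split <;> simp

lemma e13_neg {N : ℕ} (X : Matrix (Fin N × Fin N) (Fin N × Fin N) ℂ) :
    e13 (-X) = -(e13 X) := by
  ext p q
  simp only [e13, Matrix.of_apply, Matrix.neg_apply, mul_ite, mul_one, mul_zero]
  split <;> simp

lemma e23_neg {N : ℕ} (X : Matrix (Fin N × Fin N) (Fin N × Fin N) ℂ) :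
    e23 (-X) = -(e23 X) := by
  ext p q
  simp only [e23, Matrix.of_apply, Matrix.neg_apply, mul_ite, mul_one, mul_zero]
  split <;> simp


/-- The component identity (in the tensor component `E_ij ⊗ E_kk ⊗ E_ji`) of the quantum
dynamical Yang–Baxter equation, with `x = q_i - q_k` and `y = q_k - q_j`. -/
theorem component_identity (N : ℕ) (hN : 1 ≤ N)
    (R : ℂ → ℂ → Matrix (Fin N × Fin N) (Fin N × Fin N) ℂ) (E : ℂ → ℂ)
    (hAYBE : ∀ ℏ η z₁ z₂ z₃ : ℂ,
      e12 (R ℏ (z₁ - z₂)) * e23 (R η (z₂ - z₃)) =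
        e13 (R η (z₁ - z₃)) * e12 (R (ℏ - η) (z₁ - z₂)) +
          e23 (R (η - ℏ) (z₂ - z₃)) * e13 (R ℏ (z₁ - z₃)))
    (hskew : ∀ ℏ z : ℂ, R ℏ z = -(Perm N * R (-ℏ) (-z) * Perm N))
    (hunit : ∀ ℏ z : ℂ, R ℏ z * (Perm N * R ℏ (-z) * Perm N) =
      (E ℏ - E z) • (1 : Matrix (Fin N × Fin N) (Fin N × Fin N) ℂ))
    (φ : ℂ → ℂ → ℂ)
    (hφunit : ∀ ℏ z : ℂ, φ ℏ z * φ ℏ (-z) = E ℏ - E z)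
    (ℏ z₁ z₂ z₃ x y : ℂ) :
    e12 (R x (z₁ - z₂)) * e13 (R y (z₁ - z₃)) * e23 (R x (z₂ - z₃)) +
        (φ ℏ x * φ ℏ (-x)) • e13 (R (x + y) (z₁ - z₃)) =
      e23 (R y (z₂ - z₃)) * e13 (R x (z₁ - z₃)) * e12 (R y (z₁ - z₂)) +
        (φ ℏ y * φ ℏ (-y)) • e13 (R (x + y) (z₁ - z₃)) := by
  -- basic consequences of skew-symmetry and unitarity
  have hskew' : ∀ a z : ℂ, Perm N * R a z * Perm N = -(R (-a) (-z)) := by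
    intro a z
    have h := hskew (-a) (-z)
    rw [neg_neg, neg_neg] at h
    rw [h, neg_neg]
  have hRinv : ∀ a z : ℂ, R a z * R (-a) z = (E z - E a) • 1 := by
    intro a z
    have h1 := hunit a z
    have h2 : Perm N * R a (-z) * Perm N = -(R (-a) z) := by
      have := hskew' a (-z); rwa [neg_neg] at this
    rw [h2, mul_neg] at h1
    calc R a z * R (-a) z = -(-(R a z * R (-a) z)) := (neg_neg _).symm
      _ = -((E a - E z) • (1 : Matrix (Fin N × Fin N) (Fin N × Fin N) ℂ)) := by rw [h1]
      _ = (E z - E a) • 1 := by rw [← neg_smul, neg_sub]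
  have conj_mul : ∀ A B : Matrix (Fin N × Fin N) (Fin N × Fin N) ℂ,
      Perm N * (A * B) * Perm N = (Perm N * A * Perm N) * (Perm N * B * Perm N) := by
    intro A B
    calc Perm N * (A * B) * Perm N
        = Perm N * A * (Perm N * Perm N) * B * Perm N := by rw [perm_mul_perm]; noncomm_ring
      _ = (Perm N * A * Perm N) * (Perm N * B * Perm N) := by noncomm_ring
  have hEeven : ∀ t : ℂ, E (-t) = E t := by
    intro t
    have h1 := hRinv t (-t)
    have h2 := hRinv (-t) t
    rw [neg_neg] at h2
    have hc := congrArg (fun M => Perm N * M * Perm N) h1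
    rw [conj_mul] at hc
    have e1 : Perm N * R t (-t) * Perm N = -(R (-t) t) := by
      have := hskew' t (-t); rwa [neg_neg] at this
    have e2 : Perm N * R (-t) (-t) * Perm N = -(R t t) := by
      have := hskew' (-t) (-t); rwa [neg_neg] at this
    rw [e1, e2, neg_mul_neg, h2] at hc
    have hc2 : ((E t - E (-t)) • (1 : Matrix (Fin N × Fin N) (Fin N × Fin N) ℂ))
        = (E (-t) - E t) • 1 := by
      rw [hc, Matrix.mul_smul, Matrix.smul_mul, Matrix.mul_one, perm_mul_perm]
    have i0 : Fin N := ⟨0, hN⟩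
    have := congrArg (fun M => M (i0, i0) (i0, i0)) hc2
    simp only [Matrix.smul_apply, Matrix.one_apply_eq, smul_eq_mul, mul_one] at this
    linear_combination -this / 2
  -- AYBE with arbitrary spectral parameters
  have hA1 : ∀ a b u v : ℂ, e12 (R a u) * e23 (R b v) =
      e13 (R b (u + v)) * e12 (R (a - b) u) + e23 (R (b - a) v) * e13 (R a (u + v)) := by
    intro a b u v
    have h := hAYBE a b (u + v) v 0
    simp only [sub_zero] at h
    rw [show u + v - v = u by ring] at h
    exact h
  -- the "reversed" AYBE, obtained by conjugation with the total reversal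
  have hsw : ∀ c w : ℂ, sw (R c w) = -(R (-c) (-w)) := fun c w => by
    rw [sw_eq_perm_conj, hskew']
  have hA2 : ∀ a b u v : ℂ, e23 (R a v) * e12 (R b u) =
      e13 (R b (u + v)) * e23 (R (a - b) v) + e12 (R (b - a) u) * e13 (R a (u + v)) := by
    intro a b u v
    have h := hAYBE (-a) (-b) (-(u + v)) (-u) 0
    simp only [sub_zero] at h
    rw [show -(u + v) - -u = -v by ring] at h
    rw [show -a - -b = -(a - b) by ring, show -b - -a = -(b - a) by ring] at h
    have hc := congrArg conj3 h
    rw [conj3_mul, conj3_add, conj3_mul, conj3_mul, conj3_e12, conj3_e23, conj3_e12,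
      conj3_e23, conj3_e13, conj3_e13] at hc
    rw [hsw, hsw, hsw, hsw, hsw, hsw] at hc
    simp only [neg_neg, e12_neg, e13_neg, e23_neg, neg_mul_neg] at hc
    exact hc
  -- the main computation, with abstract spectral parameters
  have main : ∀ u v : ℂ,
      e12 (R x u) * e13 (R y (u + v)) * e23 (R x v) + (E ℏ - E x) • e13 (R (x + y) (u + v)) =
      e23 (R y v) * e13 (R x (u + v)) * e12 (R y u) + (E ℏ - E y) • e13 (R (x + y) (u + v)) := by
    intro u v
    have s1 := hA2 (x + y) y u v
    rw [show x + y - y = x by ring, show y - (x + y) = -x by ring] at s1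
    have s2 := hA1 x (x + y) u v
    rw [show x - (x + y) = -y by ring, show x + y - x = y by ring] at s2
    have hX : e12 (R x u) * e13 (R y (u + v)) * e23 (R x v)
        = e12 (R x u) * (e23 (R (x + y) v) * e12 (R y u))
          - (E u - E x) • e13 (R (x + y) (u + v)) := by
      have hinv : e12 (R x u) * e12 (R (-x) u) = (E u - E x) • 1 := by
        rw [← e12_mul, hRinv, e12_smul, e12_one]
      calc e12 (R x u) * e13 (R y (u + v)) * e23 (R x v)
          = e12 (R x u) * (e13 (R y (u + v)) * e23 (R x v)) := by rw [Matrix.mul_assoc]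
        _ = e12 (R x u) * (e23 (R (x + y) v) * e12 (R y u)
              - e12 (R (-x) u) * e13 (R (x + y) (u + v))) := by
            rw [eq_sub_of_add_eq s1.symm]
        _ = e12 (R x u) * (e23 (R (x + y) v) * e12 (R y u))
              - e12 (R x u) * (e12 (R (-x) u) * e13 (R (x + y) (u + v))) := by rw [mul_sub]
        _ = e12 (R x u) * (e23 (R (x + y) v) * e12 (R y u))
              - (E u - E x) • e13 (R (x + y) (u + v)) := by
            rw [← Matrix.mul_assoc (e12 (R x u)) (e12 (R (-x) u)) (e13 (R (x + y) (u + v))), hinv,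
              Matrix.smul_mul, Matrix.one_mul]
    have hY : e23 (R y v) * e13 (R x (u + v)) * e12 (R y u)
        = e12 (R x u) * (e23 (R (x + y) v) * e12 (R y u))
          - (E u - E y) • e13 (R (x + y) (u + v)) := by
      have hinv : e12 (R (-y) u) * e12 (R y u) = (E u - E y) • 1 := by
        have := hRinv (-y) u
        rw [neg_neg, hEeven] at this
        rw [← e12_mul, this, e12_smul, e12_one]
      have hB : e23 (R y v) * e13 (R x (u + v))
          = e12 (R x u) * e23 (R (x + y) v) - e13 (R (x + y) (u + v)) * e12 (R (-y) u) := by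
        rw [eq_sub_iff_add_eq, add_comm]
        exact s2.symm
      calc e23 (R y v) * e13 (R x (u + v)) * e12 (R y u)
          = (e12 (R x u) * e23 (R (x + y) v)
              - e13 (R (x + y) (u + v)) * e12 (R (-y) u)) * e12 (R y u) := by rw [hB]
        _ = e12 (R x u) * (e23 (R (x + y) v) * e12 (R y u))
              - e13 (R (x + y) (u + v)) * (e12 (R (-y) u) * e12 (R y u)) := by
            rw [sub_mul, Matrix.mul_assoc, Matrix.mul_assoc]
        _ = e12 (R x u) * (e23 (R (x + y) v) * e12 (R y u))
              - (E u - E y) • e13 (R (x + y) (u + v)) := by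
            rw [hinv, Matrix.mul_smul, Matrix.mul_one]
    rw [hX, hY]
    module
  have hw : z₁ - z₃ = (z₁ - z₂) + (z₂ - z₃) := by ring
  rw [hφunit, hφunit, hw]
  exact main (z₁ - z₂) (z₂ - z₃)
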